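/- Let P = (G, u, E, v, C, L, f) be an approximate encoded permutation with Dev(P) ≤ ε ≤ 1/2. For any unit vector Σ_g a_g|g⟩ over G, the inner product between the ideal output state Σ_{g,c} (a_g/√|C|)|u(g)⟩|c⟩ and the actual output state Σ_{g,c} (a_g/√|C|)|f⁻¹(v(f(g,c)))⟩ (states over the basis (G×C) ⊔ L) has magnitude at least 1 − 2ε. -/

import Mathlib

open Finset

set_option maxHeartbeats 1000000 in
/-- **Fidelity bound for approximate encoded permutations.** Let
`P = (G, u, E, v, C, L, f)` be an approximate encoded permutation whose deviation
(the maximum over `g` of the fraction of deviated coset values) is at most `ε ≤ 1/2`.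
For any unit input `Σ_g a_g|g⟩`, the inner product between the ideal output state
`Σ_{g,c} (a_g/√|C|)|u(g), c⟩` and the actual output state
`Σ_{g,c} (a_g/√|C|)|f⁻¹(v(f(g,c)))⟩`, both states over the basis `(G×C) ⊔ L`,
has magnitude at least `1 − 2ε`. -/
theorem fidelity_bound {G E C L : Type*} [Fintype G] [Fintype C] [Fintype L]
    [DecidableEq E] [DecidableEq G] [DecidableEq C] [DecidableEq L] [Nonempty C]
    (u : Equiv.Perm G) (v : Equiv.Perm E) (f : (G × C) ⊕ L ≃ E)
    (ε : ℝ) (hε : ε ≤ 1 / 2)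
    (hdev : ∀ g : G,
      (((Finset.univ.filter fun c : C =>
            ∀ c' : C, v (f (Sum.inl (g, c))) ≠ f (Sum.inl (u g, c'))).card : ℝ) /
          Fintype.card C) ≤ ε)
    (a : G → ℂ) (ha : ∑ g, ‖a g‖ ^ 2 = 1) :
    1 - 2 * ε ≤
      ‖∑ x : (G × C) ⊕ L,
          (starRingEnd ℂ)
            (∑ g : G, ∑ c : C,
              (a g / (Real.sqrt (Fintype.card C) : ℂ)) *
                if x = Sum.inl (u g, c) then 1 else 0) *
          (∑ g : G, ∑ c : C,
            (a g / (Real.sqrt (Fintype.card C) : ℂ)) *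
              if x = f.symm (v (f (Sum.inl (g, c)))) then 1 else 0)‖ := by
  classical
  set s : ℂ := ((Real.sqrt (Fintype.card C) : ℝ) : ℂ) with hs
  set ψ : ((G × C) ⊕ L) ≃ ((G × C) ⊕ L) := f.trans (v.trans f.symm) with hψdef
  have hψ : ∀ x, f.symm (v (f x)) = ψ x := fun _ => rfl
  set n : ℝ := (Fintype.card C : ℝ) with hndef
  have hn0 : (0:ℝ) < n := by rw [hndef]; exact_mod_cast Fintype.card_pos
  have hconj : (starRingEnd ℂ) s = s := by rw [hs]; exact Complex.conj_ofReal _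
  have hss : s * s = (n : ℂ) := by
    rw [hs, ← Complex.ofReal_mul, Real.mul_self_sqrt hn0.le]
  set T : Finset ((G × C) × (G × C)) :=
    univ.filter (fun pq => ψ (Sum.inl pq.1) = Sum.inl (u pq.2.1, pq.2.2)) with hTdef
  set Dv : G → Finset C := fun g =>
    univ.filter fun c : C => ∀ c' : C, ψ (Sum.inl (g, c)) ≠ Sum.inl (u g, c') with hDdef
  -- injectivity facts
  have hq_inj : ∀ q q' : G × C,
      (Sum.inl (u q.1, q.2) : (G × C) ⊕ L) = Sum.inl (u q'.1, q'.2) → q = q' := by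
    intro q q' h
    simp only [Sum.inl.injEq, Prod.mk.injEq] at h
    exact Prod.ext (u.injective h.1) h.2
  have hp_inj : ∀ p p' : G × C, ψ (Sum.inl p) = ψ (Sum.inl p') → p = p' := by
    intro p p' h
    exact Sum.inl_injective (ψ.injective h)
  have hdn : ∀ g, (Dv g).card ≤ Fintype.card C := fun g => by
    rw [hDdef]; exact Finset.card_le_univ _
  have hd : ∀ g, ((Dv g).card : ℝ) / n ≤ ε := by
    intro g
    have heq : (univ.filter fun c : C => ∀ c' : C, ψ (Sum.inl (g, c)) ≠ Sum.inl (u g, c'))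
        = (univ.filter fun c : C => ∀ c' : C, v (f (Sum.inl (g, c))) ≠ f (Sum.inl (u g, c'))) := by
      refine Finset.filter_congr fun c _ => ?_
      constructor
      · intro h c' hc'
        exact h c' (by rw [← hψ, Equiv.symm_apply_eq]; exact hc')
      · intro h c' hc'
        exact h c' (by rw [← hψ, Equiv.symm_apply_eq] at hc'; exact hc')
    have : Dv g = (univ.filter fun c : C =>
        ∀ c' : C, v (f (Sum.inl (g, c))) ≠ f (Sum.inl (u g, c'))) := by rw [hDdef]; exact heq
    rw [this]
    exact hdev g
  -- Step 1: rewrite the inner product as a sum over T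
  have key : (∑ x : (G × C) ⊕ L,
          (starRingEnd ℂ)
            (∑ g : G, ∑ c : C, (a g / s) * if x = Sum.inl (u g, c) then 1 else 0) *
          (∑ g : G, ∑ c : C, (a g / s) * if x = f.symm (v (f (Sum.inl (g, c)))) then 1 else 0))
      = ∑ pq ∈ T, (starRingEnd ℂ) (a pq.2.1) * a pq.1.1 / (n : ℂ) := by
    have e1 : ∀ x : (G × C) ⊕ L,
        (∑ g : G, ∑ c : C, (a g / s) * if x = Sum.inl (u g, c) then 1 else 0)
          = ∑ q : G × C, (a q.1 / s) * if x = Sum.inl (u q.1, q.2) then 1 else 0 := by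
      intro x; rw [Fintype.sum_prod_type]
    have e2 : ∀ x : (G × C) ⊕ L,
        (∑ g : G, ∑ c : C, (a g / s) * if x = f.symm (v (f (Sum.inl (g, c)))) then 1 else 0)
          = ∑ p : G × C, (a p.1 / s) * if x = ψ (Sum.inl p) then 1 else 0 := by
      intro x; rw [Fintype.sum_prod_type]; rfl
    calc (∑ x : (G × C) ⊕ L,
          (starRingEnd ℂ)
            (∑ g : G, ∑ c : C, (a g / s) * if x = Sum.inl (u g, c) then 1 else 0) *
          (∑ g : G, ∑ c : C, (a g / s) * if x = f.symm (v (f (Sum.inl (g, c)))) then 1 else 0))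
        = ∑ x : (G × C) ⊕ L, ∑ p : G × C,
            if x = ψ (Sum.inl p) then
              (starRingEnd ℂ)
                (∑ q : G × C, (a q.1 / s) * if x = Sum.inl (u q.1, q.2) then 1 else 0)
                * (a p.1 / s)
            else 0 := by
          refine Finset.sum_congr rfl fun x _ => ?_
          rw [e1, e2, Finset.mul_sum]
          refine Finset.sum_congr rfl fun p _ => ?_
          split_ifs <;> ring
      _ = ∑ p : G × C, ∑ x : (G × C) ⊕ L,
            if x = ψ (Sum.inl p) then
              (starRingEnd ℂ)
                (∑ q : G × C, (a q.1 / s) * if x = Sum.inl (u q.1, q.2) then 1 else 0)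
                * (a p.1 / s)
            else 0 := Finset.sum_comm
      _ = ∑ p : G × C,
            (starRingEnd ℂ)
              (∑ q : G × C, (a q.1 / s) * if ψ (Sum.inl p) = Sum.inl (u q.1, q.2) then 1 else 0)
              * (a p.1 / s) := by
          refine Finset.sum_congr rfl fun p _ => ?_
          rw [Finset.sum_ite_eq' univ (ψ (Sum.inl p))]
          simp
      _ = ∑ p : G × C, ∑ q : G × C,
            (if ψ (Sum.inl p) = Sum.inl (u q.1, q.2) then
              (starRingEnd ℂ) (a q.1) * a p.1 / (n : ℂ) else 0) := by
          refine Finset.sum_congr rfl fun p _ => ?_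
          rw [map_sum, Finset.sum_mul]
          refine Finset.sum_congr rfl fun q _ => ?_
          split_ifs with h
          · rw [mul_one, map_div₀, hconj, div_mul_div_comm, hss]
          · simp
      _ = ∑ pq ∈ T, (starRingEnd ℂ) (a pq.2.1) * a pq.1.1 / (n : ℂ) := by
          rw [hTdef, Finset.sum_filter]
          conv_rhs => rw [Fintype.sum_prod_type]
  rw [key]
  -- Counting lemma: good pairs
  have hgood : ∀ g : G,
      (T.filter fun pq => pq.1.1 = g ∧ pq.2.1 = g).card = Fintype.card C - (Dv g).card := by
    intro g
    have hcard : (univ.filter fun c : C =>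
        ¬ ∀ c' : C, ψ (Sum.inl (g, c)) ≠ Sum.inl (u g, c')).card
          = Fintype.card C - (Dv g).card := by
      have h1 := Finset.card_filter_add_card_filter_not (s := (univ : Finset C))
        (p := fun c : C => ∀ c' : C, ψ (Sum.inl (g, c)) ≠ Sum.inl (u g, c'))
      rw [Finset.card_univ] at h1
      have h2 : (Dv g).card = (univ.filter fun c : C =>
          ∀ c' : C, ψ (Sum.inl (g, c)) ≠ Sum.inl (u g, c')).card := by rw [hDdef]
      omega
    rw [← hcard]
    refine Finset.card_bij (fun pq _ => pq.1.2) ?_ ?_ ?_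
    · intro pq hpq
      simp only [hTdef, Finset.mem_filter, Finset.mem_univ, true_and] at hpq
      obtain ⟨hT', h1, h2⟩ := hpq
      simp only [Finset.mem_filter, Finset.mem_univ, true_and]
      push_neg
      refine ⟨pq.2.2, ?_⟩
      have h3 : (g, pq.1.2) = pq.1 := by rw [← h1]
      rw [h3, hT', h2]
    · intro pq hpq pq' hpq' hcc
      simp only [hTdef, Finset.mem_filter, Finset.mem_univ, true_and] at hpq hpq'
      obtain ⟨hT1, h11, h12⟩ := hpq
      obtain ⟨hT2, h21, h22⟩ := hpq'
      have hp : pq.1 = pq'.1 := Prod.ext (h11.trans h21.symm) hcc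
      have hq : pq.2 = pq'.2 := hq_inj _ _ (by rw [← hT1, ← hT2, hp])
      exact Prod.ext hp hq
    · intro c hc
      simp only [Finset.mem_filter, Finset.mem_univ, true_and] at hc
      push_neg at hc
      obtain ⟨c', hc'⟩ := hc
      refine ⟨((g, c), (g, c')), ?_, rfl⟩
      simp only [hTdef, Finset.mem_filter, Finset.mem_univ, true_and, and_true]
      exact hc'
  -- Counting lemma: bad pairs, by first coordinate
  have hbad1 : ∀ g : G,
      (T.filter fun pq => pq.1.1 = g ∧ ¬ pq.1.1 = pq.2.1).card ≤ (Dv g).card := by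
    intro g
    refine Finset.card_le_card_of_injOn (fun pq => pq.1.2) ?_ ?_
    · intro pq hpq
      simp only [Finset.mem_coe, hTdef, Finset.mem_filter, Finset.mem_univ, true_and] at hpq
      obtain ⟨hT', h1, h2⟩ := hpq
      simp only [Finset.mem_coe, hDdef, Finset.mem_filter, Finset.mem_univ, true_and]
      intro c' hc'
      have h3 : (g, pq.1.2) = pq.1 := by rw [← h1]
      rw [h3, hT'] at hc'
      simp only [Sum.inl.injEq, Prod.mk.injEq] at hc'
      exact h2 (h1.trans (u.injective hc'.1).symm)
    · intro pq hpq pq' hpq' hcc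
      simp only [Finset.coe_filter, Set.mem_setOf_eq, hTdef, Finset.mem_filter,
        Finset.mem_univ, true_and] at hpq hpq'
      obtain ⟨hT1, h11, h12⟩ := hpq
      obtain ⟨hT2, h21, h22⟩ := hpq'
      have hp : pq.1 = pq'.1 := Prod.ext (h11.trans h21.symm) hcc
      have hq : pq.2 = pq'.2 := hq_inj _ _ (by rw [← hT1, ← hT2, hp])
      exact Prod.ext hp hq
  -- Counting lemma: bad pairs, by second coordinate
  have hbad2 : ∀ g : G,
      (T.filter fun pq => pq.2.1 = g ∧ ¬ pq.1.1 = pq.2.1).card ≤ (Dv g).card := by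
    intro g
    have hB : (T.filter fun pq => pq.2.1 = g ∧ pq.1.1 = pq.2.1)
        = T.filter fun pq => pq.1.1 = g ∧ pq.2.1 = g := by
      refine Finset.filter_congr fun pq _ => ?_
      constructor
      · rintro ⟨h1, h2⟩; exact ⟨h2.trans h1, h1⟩
      · rintro ⟨h1, h2⟩; exact ⟨h2, h1.trans h2.symm⟩
    have hdisj : Disjoint (T.filter fun pq => pq.2.1 = g ∧ ¬ pq.1.1 = pq.2.1)
        (T.filter fun pq => pq.2.1 = g ∧ pq.1.1 = pq.2.1) := by
      rw [Finset.disjoint_left]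
      intro pq h1 h2
      simp only [Finset.mem_filter] at h1 h2
      exact h1.2.2 h2.2.2
    have hunion : ((T.filter fun pq => pq.2.1 = g ∧ ¬ pq.1.1 = pq.2.1)
        ∪ (T.filter fun pq => pq.2.1 = g ∧ pq.1.1 = pq.2.1)).card ≤ Fintype.card C := by
      rw [← Finset.card_univ (α := C)]
      refine Finset.card_le_card_of_injOn (fun pq => pq.2.2) (fun _ _ => Finset.mem_univ _) ?_
      intro pq hpq pq' hpq' hcc
      simp only [Finset.coe_union, Set.mem_union, Finset.coe_filter, Set.mem_setOf_eq,
        hTdef, Finset.mem_filter, Finset.mem_univ, true_and] at hpq hpq'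
      have h1 : ψ (Sum.inl pq.1) = Sum.inl (u pq.2.1, pq.2.2) ∧ pq.2.1 = g := by
        rcases hpq with ⟨h, h', -⟩ | ⟨h, h', -⟩ <;> exact ⟨h, h'⟩
      have h2 : ψ (Sum.inl pq'.1) = Sum.inl (u pq'.2.1, pq'.2.2) ∧ pq'.2.1 = g := by
        rcases hpq' with ⟨h, h', -⟩ | ⟨h, h', -⟩ <;> exact ⟨h, h'⟩
      have hq : pq.2 = pq'.2 := Prod.ext (h1.2.trans h2.2.symm) hcc
      have hp : pq.1 = pq'.1 := hp_inj _ _ (by rw [h1.1, h2.1, hq])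
      exact Prod.ext hp hq
    rw [Finset.card_union_of_disjoint hdisj, hB, hgood g] at hunion
    have := hdn g
    omega
  -- Pointwise lower bound for cross terms
  have hlow : ∀ z w : ℂ, -((‖w‖^2 + ‖z‖^2)/2) ≤ ((starRingEnd ℂ) z * w).re := by
    intro z w
    have h1 : |((starRingEnd ℂ) z * w).re| ≤ ‖z‖ * ‖w‖ := by
      calc |((starRingEnd ℂ) z * w).re| ≤ ‖(starRingEnd ℂ) z * w‖ :=
            Complex.abs_re_le_norm _
        _ = ‖(starRingEnd ℂ) z‖ * ‖w‖ := norm_mul _ _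
        _ = ‖z‖ * ‖w‖ := by rw [Complex.norm_conj]
    have h2 := (abs_le.mp h1).1
    nlinarith [sq_nonneg (‖z‖ - ‖w‖)]
  have hsq : ∀ z : ℂ, ((starRingEnd ℂ) z * z).re = ‖z‖^2 := by
    intro z
    rw [mul_comm, Complex.mul_conj, Complex.ofReal_re, Complex.sq_norm]
  -- Main estimate on the real part
  have hre : 1 - 2 * ε ≤ (∑ pq ∈ T, (starRingEnd ℂ) (a pq.2.1) * a pq.1.1 / (n : ℂ)).re := by
    rw [Complex.re_sum]
    rw [← Finset.sum_filter_add_sum_filter_not T (fun pq => pq.1.1 = pq.2.1)]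
    -- good part
    have hgoodsum : ∑ pq ∈ T.filter (fun pq => pq.1.1 = pq.2.1),
        ((starRingEnd ℂ) (a pq.2.1) * a pq.1.1 / (n : ℂ)).re
        = ∑ g : G, ((Fintype.card C - (Dv g).card : ℕ) : ℝ) * (‖a g‖^2 / n) := by
      rw [← Finset.sum_fiberwise (T.filter fun pq => pq.1.1 = pq.2.1) (fun pq => pq.1.1)
        (fun pq => ((starRingEnd ℂ) (a pq.2.1) * a pq.1.1 / (n : ℂ)).re)]
      refine Finset.sum_congr rfl fun g _ => ?_
      have hfib : (T.filter fun pq => pq.1.1 = pq.2.1).filter (fun pq => pq.1.1 = g)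
          = T.filter fun pq => pq.1.1 = g ∧ pq.2.1 = g := by
        rw [Finset.filter_filter]
        refine Finset.filter_congr fun pq _ => ?_
        constructor
        · rintro ⟨h1, h2⟩; exact ⟨h2, h2 ▸ h1.symm⟩
        · rintro ⟨h1, h2⟩; exact ⟨h1.trans h2.symm, h1⟩
      rw [hfib]
      have hterm : ∀ pq ∈ T.filter (fun pq => pq.1.1 = g ∧ pq.2.1 = g),
          ((starRingEnd ℂ) (a pq.2.1) * a pq.1.1 / (n : ℂ)).re = ‖a g‖^2 / n := by
        intro pq hpq
        simp only [Finset.mem_filter] at hpq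
        obtain ⟨-, h1, h2⟩ := hpq
        rw [h1, h2, Complex.div_ofReal_re, hsq]
      rw [Finset.sum_congr rfl hterm, Finset.sum_const, hgood g, nsmul_eq_mul]
    -- bad part
    have hbadsum : -((∑ g : G, ((Dv g).card : ℝ) * ‖a g‖^2) / n)
        ≤ ∑ pq ∈ T.filter (fun pq => ¬ pq.1.1 = pq.2.1),
            ((starRingEnd ℂ) (a pq.2.1) * a pq.1.1 / (n : ℂ)).re := by
      have hb1 : ∑ pq ∈ T.filter (fun pq => ¬ pq.1.1 = pq.2.1), ‖a pq.1.1‖^2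
          ≤ ∑ g : G, ((Dv g).card : ℝ) * ‖a g‖^2 := by
        rw [← Finset.sum_fiberwise (T.filter fun pq => ¬ pq.1.1 = pq.2.1) (fun pq => pq.1.1)
          (fun pq => ‖a pq.1.1‖^2)]
        refine Finset.sum_le_sum fun g _ => ?_
        have hfib : (T.filter fun pq => ¬ pq.1.1 = pq.2.1).filter (fun pq => pq.1.1 = g)
            = T.filter fun pq => pq.1.1 = g ∧ ¬ pq.1.1 = pq.2.1 := by
          rw [Finset.filter_filter]
          exact Finset.filter_congr fun pq _ =>
            ⟨fun ⟨h1, h2⟩ => ⟨h2, h1⟩, fun ⟨h1, h2⟩ => ⟨h2, h1⟩⟩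
        rw [hfib]
        have h4 : ∀ pq ∈ T.filter (fun pq => pq.1.1 = g ∧ ¬ pq.1.1 = pq.2.1),
            ‖a pq.1.1‖^2 = ‖a g‖^2 := by
          intro pq hpq
          simp only [Finset.mem_filter] at hpq
          rw [hpq.2.1]
        rw [Finset.sum_congr rfl h4, Finset.sum_const, nsmul_eq_mul]
        have h0 : (0:ℝ) ≤ ‖a g‖^2 := by positivity
        exact mul_le_mul_of_nonneg_right (by exact_mod_cast hbad1 g) h0
      have hb2 : ∑ pq ∈ T.filter (fun pq => ¬ pq.1.1 = pq.2.1), ‖a pq.2.1‖^2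
          ≤ ∑ g : G, ((Dv g).card : ℝ) * ‖a g‖^2 := by
        rw [← Finset.sum_fiberwise (T.filter fun pq => ¬ pq.1.1 = pq.2.1) (fun pq => pq.2.1)
          (fun pq => ‖a pq.2.1‖^2)]
        refine Finset.sum_le_sum fun g _ => ?_
        have hfib : (T.filter fun pq => ¬ pq.1.1 = pq.2.1).filter (fun pq => pq.2.1 = g)
            = T.filter fun pq => pq.2.1 = g ∧ ¬ pq.1.1 = pq.2.1 := by
          rw [Finset.filter_filter]
          exact Finset.filter_congr fun pq _ =>
            ⟨fun ⟨h1, h2⟩ => ⟨h2, h1⟩, fun ⟨h1, h2⟩ => ⟨h2, h1⟩⟩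
        rw [hfib]
        have h4 : ∀ pq ∈ T.filter (fun pq => pq.2.1 = g ∧ ¬ pq.1.1 = pq.2.1),
            ‖a pq.2.1‖^2 = ‖a g‖^2 := by
          intro pq hpq
          simp only [Finset.mem_filter] at hpq
          rw [hpq.2.1]
        rw [Finset.sum_congr rfl h4, Finset.sum_const, nsmul_eq_mul]
        have h0 : (0:ℝ) ≤ ‖a g‖^2 := by positivity
        exact mul_le_mul_of_nonneg_right (by exact_mod_cast hbad2 g) h0
      have hstep : ∀ pq ∈ T.filter (fun pq => ¬ pq.1.1 = pq.2.1),
          -((‖a pq.1.1‖^2 + ‖a pq.2.1‖^2)/2) / n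
          ≤ ((starRingEnd ℂ) (a pq.2.1) * a pq.1.1 / (n : ℂ)).re := by
        intro pq _
        rw [Complex.div_ofReal_re]
        exact (div_le_div_iff_of_pos_right hn0).mpr (hlow _ _)
      have hrw : ∀ pq : (G × C) × (G × C), -((‖a pq.1.1‖^2 + ‖a pq.2.1‖^2)/2) / n
          = -((2*n)⁻¹) * ‖a pq.1.1‖^2 + -((2*n)⁻¹) * ‖a pq.2.1‖^2 := by
        intro pq; field_simp; ring
      calc -((∑ g : G, ((Dv g).card : ℝ) * ‖a g‖^2) / n)
          ≤ -((2*n)⁻¹) * (∑ pq ∈ T.filter (fun pq => ¬ pq.1.1 = pq.2.1), ‖a pq.1.1‖^2)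
            + -((2*n)⁻¹) * (∑ pq ∈ T.filter (fun pq => ¬ pq.1.1 = pq.2.1), ‖a pq.2.1‖^2) := by
            have hc0 : (0:ℝ) < (2*n)⁻¹ := by positivity
            have k1 := mul_le_mul_of_nonneg_left hb1 hc0.le
            have k2 := mul_le_mul_of_nonneg_left hb2 hc0.le
            have hS : (∑ g : G, ((Dv g).card : ℝ) * ‖a g‖^2) / n
                = 2 * ((2*n)⁻¹ * (∑ g : G, ((Dv g).card : ℝ) * ‖a g‖^2)) := by
              ring
            rw [hS]
            linarith
        _ = ∑ pq ∈ T.filter (fun pq => ¬ pq.1.1 = pq.2.1),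
              (-((‖a pq.1.1‖^2 + ‖a pq.2.1‖^2)/2) / n) := by
            rw [Finset.mul_sum, Finset.mul_sum, ← Finset.sum_add_distrib]
            exact (Finset.sum_congr rfl fun pq _ => (hrw pq).symm)
        _ ≤ _ := Finset.sum_le_sum hstep
    rw [hgoodsum]
    have hpt : ∀ g : G, (1 - 2*ε) * ‖a g‖^2
        ≤ ((Fintype.card C - (Dv g).card : ℕ) : ℝ) * (‖a g‖^2 / n)
          - ((Dv g).card : ℝ) * ‖a g‖^2 / n := by
      intro g
      have h1 : ((Fintype.card C - (Dv g).card : ℕ) : ℝ) = n - ((Dv g).card : ℝ) := by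
        rw [Nat.cast_sub (hdn g), hndef]
      have h2 := hd g
      have h3 : (0:ℝ) ≤ ‖a g‖^2 := by positivity
      have h4 : (n - ((Dv g).card : ℝ)) * (‖a g‖^2 / n) - ((Dv g).card : ℝ) * ‖a g‖^2 / n
          = (1 - 2*(((Dv g).card : ℝ)/n)) * ‖a g‖^2 := by
        field_simp; ring
      rw [h1, h4]
      nlinarith [mul_le_mul_of_nonneg_right h2 h3]
    have hmain : 1 - 2*ε
        ≤ (∑ g : G, ((Fintype.card C - (Dv g).card : ℕ) : ℝ) * (‖a g‖^2 / n))
          - (∑ g : G, ((Dv g).card : ℝ) * ‖a g‖^2) / n := by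
      calc 1 - 2*ε = ∑ g : G, (1 - 2*ε) * ‖a g‖^2 := by rw [← Finset.mul_sum, ha, mul_one]
        _ ≤ ∑ g : G, (((Fintype.card C - (Dv g).card : ℕ) : ℝ) * (‖a g‖^2 / n)
              - ((Dv g).card : ℝ) * ‖a g‖^2 / n) := Finset.sum_le_sum fun g _ => hpt g
        _ = _ := by rw [Finset.sum_sub_distrib, Finset.sum_div]
    linarith
  calc 1 - 2 * ε ≤ (∑ pq ∈ T, (starRingEnd ℂ) (a pq.2.1) * a pq.1.1 / (n : ℂ)).re := hre
    _ ≤ ‖∑ pq ∈ T, (starRingEnd ℂ) (a pq.2.1) * a pq.1.1 / (n : ℂ)‖ :=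
        Complex.re_le_norm _
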